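/- arXiv:2005.10714 — 2 statements merged into one kernel-verified Lean document; each statement's English description precedes it below -/
import Mathlib

section
/- The random series ∑_p (log p)·X(p)/(p − X(p)), summed over primes p, where {X(p)} are independent random variables uniformly distributed on the unit circle, converges almost surely. -/
open MeasureTheory ProbabilityTheory

/-- The uniform probability measure on the unit circle in `ℂ`. -/
noncomputable def circleUniform : MeasureTheory.Measure ℂ :=
  (ENNReal.ofReal (2 * Real.pi)⁻¹) •
    (MeasureTheory.Measure.map (fun t : ℝ => Complex.exp (t * Complex.I))
      (MeasureTheory.volume.restrict (Set.Ico 0 (2 * Real.pi))))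


open Filter Finset Topology
open scoped ENNReal NNReal

section AuxLemmas


lemma aux_logbound {n : ℝ} (hn : 2 ≤ n) : Real.log n ≤ 4 * n ^ ((4:ℝ)⁻¹) := by
  have h1 : Real.log n ≤ n ^ ((4:ℝ)⁻¹) / (4:ℝ)⁻¹ :=
    Real.log_le_rpow_div (by linarith) (by norm_num)
  calc Real.log n ≤ n ^ ((4:ℝ)⁻¹) / (4:ℝ)⁻¹ := h1
    _ = 4 * n ^ ((4:ℝ)⁻¹) := by rw [div_eq_mul_inv, inv_inv]; ring

lemma aux_rpow_eq {n : ℝ} (hn : 2 ≤ n) :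
    n ^ (-(3/2) : ℝ) * n ^ (2:ℕ) = n ^ ((4:ℝ)⁻¹) * n ^ ((4:ℝ)⁻¹) := by
  have h0 : (0:ℝ) < n := by linarith
  rw [← Real.rpow_natCast n 2, ← Real.rpow_add h0, ← Real.rpow_add h0]
  norm_num

lemma bound1 {n : ℝ} (hn : 2 ≤ n) : (Real.log n / n) ^ 2 ≤ 16 * n ^ (-(3/2) : ℝ) := by
  have h0 : (0:ℝ) < n := by linarith
  have hlog0 : 0 ≤ Real.log n := Real.log_nonneg (by linarith)
  have hA := aux_rpow_eq hn
  have hn2 : (0:ℝ) < n ^ (2:ℕ) := by positivity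
  calc (Real.log n / n) ^ 2 = (Real.log n) ^ 2 / n ^ (2:ℕ) := div_pow _ _ _
    _ ≤ (4 * n ^ ((4:ℝ)⁻¹)) ^ 2 / n ^ (2:ℕ) := by gcongr; exact aux_logbound hn
    _ = 16 * n ^ (-(3/2) : ℝ) := by
        rw [div_eq_iff hn2.ne', mul_assoc, hA]
        ring
lemma bound2 {n : ℝ} (hn : 2 ≤ n) {d : ℝ} (hd : n - 1 ≤ d) :
    Real.log n / (n * d) ≤ 16 * n ^ (-(3/2) : ℝ) := by
  have h0 : (0:ℝ) < n := by linarith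
  have hlog0 : 0 ≤ Real.log n := Real.log_nonneg (by linarith)
  have hA := aux_rpow_eq hn
  have hx1 : 1 ≤ n ^ ((4:ℝ)⁻¹) := Real.one_le_rpow (by linarith) (by norm_num)
  have hx0 : 0 < n ^ ((4:ℝ)⁻¹) := by linarith
  have hd2 : n / 2 ≤ d := by linarith
  have hd0 : 0 < n / 2 := by linarith
  have hn2 : (0:ℝ) < n ^ (2:ℕ) := by positivity
  calc Real.log n / (n * d) ≤ Real.log n / (n * (n / 2)) := by
        apply div_le_div_of_nonneg_left hlog0 (mul_pos h0 hd0)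
        exact mul_le_mul_of_nonneg_left hd2 h0.le
    _ = 2 * Real.log n / n ^ (2:ℕ) := by ring
    _ ≤ 16 * (n ^ ((4:ℝ)⁻¹) * n ^ ((4:ℝ)⁻¹)) / n ^ (2:ℕ) := by
        exact (div_le_div_iff_of_pos_right hn2).2 (by nlinarith [aux_logbound hn])
    _ = 16 * n ^ (-(3/2) : ℝ) := by
        rw [div_eq_iff hn2.ne', mul_assoc, hA]


lemma sum_filter_range_eq_sum_count {M : Type*} [AddCommMonoid M]
    (p : ℕ → Prop) [DecidablePred p] (t : ℕ → M) (N : ℕ) :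
    ∑ n ∈ (Finset.range N).filter p, t n
      = ∑ k ∈ Finset.range (Nat.count p N), t (Nat.nth p k) := by
  induction N with
  | zero => simp
  | succ N ih =>
    rw [Finset.range_add_one, Finset.filter_insert, Nat.count_succ]
    by_cases hpN : p N
    · rw [if_pos hpN, Finset.sum_insert (by simp), if_pos hpN,
        Finset.sum_range_succ, Nat.nth_count hpN, ih]
      exact add_comm _ _
    · rw [if_neg hpN, if_neg hpN, add_zero, ih]

lemma tendsto_count_atTop (p : ℕ → Prop) [DecidablePred p] (hp : (setOf p).Infinite) :
    Tendsto (fun N => Nat.count p N) atTop atTop := by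
  refine tendsto_atTop_atTop_of_monotone (Nat.count_monotone p) fun b => ?_
  refine ⟨Nat.nth p b + 1, ?_⟩
  rw [Nat.count_succ, if_pos (Nat.nth_mem_of_infinite hp b), Nat.count_nth_of_infinite hp]
  omega


variable {Ω : Type*} [MeasurableSpace Ω] {μ : Measure Ω}

lemma iIndepFun_precomp {ι κ : Type*} [Nonempty κ] {β : Type*} [mβ : MeasurableSpace β]
    {f : ι → Ω → β} (hf : iIndepFun f μ) {e : κ → ι}
    (he : Function.Injective e) :
    iIndepFun (fun k => f (e k)) μ := by
  classical
  rw [iIndepFun_iff_measure_inter_preimage_eq_mul] at hf ⊢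
  intro S sets hsets
  obtain ⟨g, hg⟩ := he.hasLeftInverse
  set sets' : ι → Set β := fun i => if i ∈ S.image e then sets (g i) else Set.univ with hsets'
  have hkey : ∀ k ∈ S, sets' (e k) = sets k := by
    intro k hk
    have hmem : e k ∈ S.image e := Finset.mem_image_of_mem e hk
    simp only [hsets', if_pos hmem, hg k]
  have h1 : (⋂ k ∈ S, f (e k) ⁻¹' sets k) = ⋂ i ∈ S.image e, f i ⁻¹' sets' i := by
    rw [Finset.set_biInter_finset_image]
    exact Set.iInter₂_congr fun k hk => by rw [hkey k hk]
  have h2 : μ (⋂ i ∈ S.image e, f i ⁻¹' sets' i) = ∏ i ∈ S.image e, μ (f i ⁻¹' sets' i) := by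
    refine hf (S.image e) fun i hi => ?_
    rw [Finset.mem_image] at hi
    obtain ⟨k, hk, rfl⟩ := hi
    rw [hkey k hk]
    exact hsets k hk
  rw [h1, h2, Finset.prod_image fun a ha b hb hab => he hab]
  exact Finset.prod_congr rfl fun k hk => by rw [hkey k hk]


lemma circleUniform_norm_one : ∀ᵐ z ∂circleUniform, ‖z‖ = 1 := by
  have hmeas : Measurable fun t : ℝ => Complex.exp (t * Complex.I) := by fun_prop
  have hs : MeasurableSet {z : ℂ | ¬ ‖z‖ = 1} :=
    ((measurable_norm.comp measurable_id)
      (measurableSet_singleton (1:ℝ))).compl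
  rw [ae_iff]
  unfold circleUniform
  rw [Measure.smul_apply, Measure.map_apply hmeas hs]
  have : (fun t : ℝ => Complex.exp (t * Complex.I)) ⁻¹' {z : ℂ | ¬ ‖z‖ = 1} = ∅ := by
    ext t
    simp [Complex.norm_exp_ofReal_mul_I]
  rw [this]
  simp

lemma circleUniform_integral_id : ∫ z, z ∂circleUniform = 0 := by
  have hmeas : Measurable fun t : ℝ => Complex.exp (t * Complex.I) := by fun_prop
  have hpi : (0:ℝ) ≤ 2 * Real.pi := by positivity
  unfold circleUniform
  rw [integral_smul_measure]
  rw [show (fun z : ℂ => z) = id from rfl,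
    integral_map hmeas.aemeasurable aestronglyMeasurable_id]
  have h1 : ∫ t in Set.Ico (0:ℝ) (2 * Real.pi), Complex.exp (t * Complex.I)
      = ∫ t in (0:ℝ)..(2 * Real.pi), Complex.exp (Complex.I * t) := by
    rw [intervalIntegral.integral_of_le hpi, MeasureTheory.integral_Ioc_eq_integral_Ioo,
      MeasureTheory.integral_Ico_eq_integral_Ioo]
    simp_rw [mul_comm]
  simp only [id]
  rw [h1, integral_exp_mul_complex Complex.I_ne_zero]
  have h2 : Complex.I * (2 * Real.pi : ℝ) = 2 * Real.pi * Complex.I := by push_cast; ring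
  rw [h2, Complex.exp_two_pi_mul_I]
  simp


variable {Ω : Type*} [MeasurableSpace Ω] {μ : Measure Ω} [IsProbabilityMeasure μ]

lemma key_indep_sum_converges
    (Z : ℕ → Ω → ℝ) (hm : ∀ n, Measurable (Z n))
    (hind : iIndepFun Z μ)
    (b : ℕ → ℝ) (hb : ∀ n, ∀ᵐ ω ∂μ, |Z n ω| ≤ b n)
    (hmean : ∀ n, ∫ ω, Z n ω ∂μ = 0)
    (hsum : Summable (fun n => b n ^ 2)) :
    ∀ᵐ ω ∂μ, ∃ L, Tendsto (fun N => ∑ k ∈ Finset.range N, Z k ω) atTop (𝓝 L) := by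
  classical
  have hsm : ∀ n, StronglyMeasurable (Z n) := fun n => (hm n).stronglyMeasurable
  set ℱ := MeasureTheory.Filtration.natural Z hsm with hℱ
  have hLtop : ∀ n, MemLp (Z n) ⊤ μ := fun n =>
    memLp_top_of_bound (hsm n).aestronglyMeasurable (b n)
      ((hb n).mono fun ω h => by simpa [Real.norm_eq_abs] using h)
  have hL2 : ∀ n, MemLp (Z n) 2 μ := fun n => (hLtop n).mono_exponent le_top
  have hint : ∀ n, Integrable (Z n) μ := fun n => (hL2 n).integrable one_le_two
  set f : ℕ → Ω → ℝ := fun N ω => ∑ k ∈ Finset.range (N + 1), Z k ω with hf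
  have hfint : ∀ N, Integrable (f N) μ := fun N => integrable_finset_sum _ fun k _ => hint k
  have hadp : StronglyAdapted ℱ f := by
    intro N
    refine Finset.stronglyMeasurable_fun_sum _ fun k hk => ?_
    have h1 : StronglyMeasurable[MeasurableSpace.comap (Z k) inferInstance] (Z k) :=
      stronglyMeasurable_id.comp_measurable (measurable_iff_comap_le.2 le_rfl)
    exact h1.mono (le_iSup₂ (f := fun j (_ : j ≤ N) => MeasurableSpace.comap (Z j) inferInstance)
      k (Finset.mem_range_succ_iff.1 hk))
  have hmart : Martingale f ℱ μ := by
    refine martingale_nat hadp hfint fun N => ?_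
    have h1 : f (N + 1) = f N + Z (N + 1) := by
      funext ω; simp [hf, Finset.sum_range_succ]
    rw [h1]
    have h2 := condExp_add (μ := μ) (m := ℱ N) (hfint N) (hint (N + 1))
    have h3 : μ[f N|ℱ N] =ᵐ[μ] f N :=
      (condExp_of_stronglyMeasurable (ℱ.le N) (hadp N) (hfint N)).symm ▸ EventuallyEq.rfl
    have h4 : μ[Z (N + 1)|ℱ N] =ᵐ[μ] fun _ => μ[Z (N + 1)] :=
      hind.condExp_natural_ae_eq_of_lt hsm (Nat.lt_succ_self N)
    filter_upwards [h2, h3, h4] with ω h2 h3 h4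
    simp [h2, h3, h4, hmean (N + 1)]
  set B : ℝ := ∑' n, b n ^ 2 with hB
  have hfeq : ∀ n, f n = ∑ k ∈ Finset.range (n + 1), Z k := by
    intro n; funext ω; simp [hf]
  have hfL2 : ∀ n, MemLp (f n) 2 μ := by
    intro n; rw [hfeq n]; exact memLp_finset_sum' _ fun k _ => hL2 k
  have hvarZ : ∀ k, variance (Z k) μ ≤ b k ^ 2 := by
    intro k
    rw [variance_eq_sub (hL2 k)]
    have h0 : μ[Z k] = 0 := hmean k
    rw [h0]
    have h1 : μ[(Z k) ^ 2] ≤ ∫ _ω, b k ^ 2 ∂μ := by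
      refine integral_mono_ae (hL2 k).integrable_sq (integrable_const _) ?_
      filter_upwards [hb k] with ω h
      simp only [Pi.pow_apply]
      have := sq_abs (Z k ω)
      nlinarith [abs_nonneg (Z k ω)]
    simpa using h1
  have hf2 : ∀ n, μ[(f n) ^ 2] ≤ B := by
    intro n
    have h1 : variance (f n) μ = ∑ k ∈ Finset.range (n + 1), variance (Z k) μ := by
      rw [hfeq n]
      exact IndepFun.variance_sum (fun k _ => hL2 k)
        (fun i _ j hj hij => hind.indepFun hij)
    have h2 : variance (f n) μ ≤ B := by
      rw [h1]
      calc ∑ k ∈ Finset.range (n + 1), variance (Z k) μ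
          ≤ ∑ k ∈ Finset.range (n + 1), b k ^ 2 :=
            Finset.sum_le_sum fun k _ => hvarZ k
        _ ≤ B := Summable.sum_le_tsum _ (fun k _ => sq_nonneg _) hsum
    have h3 := variance_eq_sub (hfL2 n)
    have h4 : μ[f n] = 0 := by
      have : μ[f n] = ∑ k ∈ Finset.range (n + 1), ∫ ω, Z k ω ∂μ :=
        integral_finset_sum _ fun k _ => hint k
      rw [this]
      simp [hmean]
    rw [h3, h4] at h2
    simpa using h2
  have habs : ∀ n, ∫ ω, |f n ω| ∂μ ≤ (B + 1) / 2 := by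
    intro n
    have hint2 : Integrable (fun ω => ((f n ω) ^ 2 + 1) / 2) μ :=
      ((hfL2 n).integrable_sq.add (integrable_const 1)).div_const 2
    have h1 : ∫ ω, |f n ω| ∂μ ≤ ∫ ω, ((f n ω) ^ 2 + 1) / 2 ∂μ := by
      refine integral_mono (hfint n).abs hint2 fun ω => ?_
      nlinarith [sq_nonneg (|f n ω| - 1), sq_abs (f n ω)]
    have h2 : ∫ ω, ((f n ω) ^ 2 + 1) / 2 ∂μ = (μ[(f n) ^ 2] + 1) / 2 := by
      rw [integral_div, integral_add (hfL2 n).integrable_sq (integrable_const 1)]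
      simp [Pi.pow_apply]
    rw [h2] at h1
    linarith [hf2 n]
  have hbdd : ∀ n, eLpNorm (f n) 1 μ ≤ ((B + 1) / 2).toNNReal := by
    intro n
    rw [eLpNorm_one_eq_lintegral_enorm, ← ofReal_integral_norm_eq_lintegral_enorm (hfint n)]
    have : (((B + 1) / 2).toNNReal : ℝ≥0∞) = ENNReal.ofReal ((B + 1) / 2) := rfl
    rw [this]
    refine ENNReal.ofReal_le_ofReal ?_
    simpa [Real.norm_eq_abs] using habs n
  have hconv := (hmart.submartingale).exists_ae_tendsto_of_bdd hbdd
  filter_upwards [hconv] with ω hc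
  obtain ⟨c, hc⟩ := hc
  refine ⟨c, (tendsto_add_atTop_iff_nat 1).1 ?_⟩
  exact hc

end AuxLemmas

theorem random_euler_series_converges_ae
    {Ω : Type*} [MeasurableSpace Ω] (μ : MeasureTheory.Measure Ω)
    [MeasureTheory.IsProbabilityMeasure μ]
    (X : ℕ → Ω → ℂ) (hmeas : ∀ n, Measurable (X n))
    (hunif : ∀ p : ℕ, p.Prime → MeasureTheory.Measure.map (X p) μ = circleUniform)
    (hindep : ProbabilityTheory.iIndepFun
      (fun p : Nat.Primes => X (p : ℕ)) μ) :
    ∀ᵐ ω ∂μ, ∃ L : ℂ, Filter.Tendsto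
      (fun N : ℕ => ∑ p ∈ (Finset.range N).filter Nat.Prime,
        (Real.log p) * X p ω / ((p : ℂ) - X p ω))
      Filter.atTop (nhds L) := by
  classical
  set e : ℕ → ℕ := Nat.nth Nat.Prime with he
  have hePrime : ∀ k, (e k).Prime := Nat.prime_nth_prime
  have heInj : Function.Injective e := Nat.nth_injective Nat.infinite_setOf_prime
  have he2 : ∀ k, 2 ≤ e k := fun k => (hePrime k).two_le
  have he2' : ∀ k, (2:ℝ) ≤ (e k : ℝ) := fun k => by exact_mod_cast he2 k
  -- per-prime facts
  have hX1 : ∀ p : ℕ, p.Prime → ∀ᵐ ω ∂μ, ‖X p ω‖ = 1 := by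
    intro p hp
    have hs : MeasurableSet {z : ℂ | ¬ ‖z‖ = 1} :=
      (measurable_norm (measurableSet_singleton (1:ℝ))).compl
    rw [ae_iff]
    have h1 : {ω | ¬ ‖X p ω‖ = 1} = X p ⁻¹' {z | ¬ ‖z‖ = 1} := rfl
    rw [h1, ← Measure.map_apply (hmeas p) hs, hunif p hp]
    have h2 := circleUniform_norm_one
    rwa [ae_iff] at h2
  have hXint : ∀ p : ℕ, p.Prime → Integrable (X p) μ := fun p hp =>
    memLp_one_iff_integrable.1
      ((memLp_top_of_bound (hmeas p).aestronglyMeasurable 1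
        ((hX1 p hp).mono fun ω h => le_of_eq h)).mono_exponent le_top)
  have hXmean : ∀ p : ℕ, p.Prime → ∫ ω, X p ω ∂μ = 0 := by
    intro p hp
    have h1 : ∫ ω, X p ω ∂μ = ∫ z, id z ∂(Measure.map (X p) μ) :=
      (integral_map (hmeas p).aemeasurable aestronglyMeasurable_id).symm
    rw [h1, hunif p hp]
    simpa [id] using circleUniform_integral_id
  -- reindexing
  have hιinj : Function.Injective (fun k => (⟨e k, hePrime k⟩ : Nat.Primes)) :=
    fun a b h => heInj (congrArg Subtype.val h)
  have hYind : iIndepFun (fun k => X (e k)) μ :=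
    iIndepFun_precomp hindep hιinj
  set c : ℕ → ℂ := fun k => ((Real.log (e k) : ℝ) : ℂ) / ((e k : ℕ) : ℂ) with hc
  set Zr : ℕ → Ω → ℝ := fun k ω => (c k * X (e k) ω).re with hZr
  set Zi : ℕ → Ω → ℝ := fun k ω => (c k * X (e k) ω).im with hZi
  set b : ℕ → ℝ := fun k => Real.log (e k) / (e k) with hb
  have hcnorm : ∀ k, ‖c k‖ = b k := by
    intro k
    rw [hc, hb]
    simp only [norm_div, Complex.norm_real, Complex.norm_natCast, Real.norm_eq_abs]
    rw [abs_of_nonneg (Real.log_nonneg (by linarith [he2' k]))]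
  have hZrmeas : ∀ k, Measurable (Zr k) := fun k =>
    Complex.measurable_re.comp (measurable_const.mul (hmeas (e k)))
  have hZimeas : ∀ k, Measurable (Zi k) := fun k =>
    Complex.measurable_im.comp (measurable_const.mul (hmeas (e k)))
  have hZrind : iIndepFun Zr μ :=
    hYind.comp (fun k z => (c k * z).re)
      (fun k => Complex.measurable_re.comp (measurable_const.mul measurable_id))
  have hZiind : iIndepFun Zi μ :=
    hYind.comp (fun k z => (c k * z).im)
      (fun k => Complex.measurable_im.comp (measurable_const.mul measurable_id))
  have hZbound : ∀ k, ∀ᵐ ω ∂μ, ‖c k * X (e k) ω‖ ≤ b k := by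
    intro k
    filter_upwards [hX1 (e k) (hePrime k)] with ω h
    rw [norm_mul, h, mul_one, hcnorm k]
  have hZrb : ∀ k, ∀ᵐ ω ∂μ, |Zr k ω| ≤ b k := fun k =>
    (hZbound k).mono fun ω h =>
      le_trans (by exact Complex.abs_re_le_norm _) h
  have hZib : ∀ k, ∀ᵐ ω ∂μ, |Zi k ω| ≤ b k := fun k =>
    (hZbound k).mono fun ω h =>
      le_trans (by exact Complex.abs_im_le_norm _) h
  have hintCX : ∀ k, Integrable (fun ω => c k * X (e k) ω) μ := fun k =>
    (hXint _ (hePrime k)).const_mul _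
  have hCXmean : ∀ k, ∫ ω, c k * X (e k) ω ∂μ = 0 := by
    intro k
    rw [integral_const_mul, hXmean _ (hePrime k), mul_zero]
  have hZrmean : ∀ k, ∫ ω, Zr k ω ∂μ = 0 := by
    intro k
    have h1 := integral_re (hintCX k)
    simp only [RCLike.re_to_complex] at h1
    rw [hZr]
    simp only
    rw [h1, hCXmean k, Complex.zero_re]
  have hZimean : ∀ k, ∫ ω, Zi k ω ∂μ = 0 := by
    intro k
    have h1 := integral_im (hintCX k)
    simp only [RCLike.im_to_complex] at h1
    rw [hZi]
    simp only
    rw [h1, hCXmean k, Complex.zero_im]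
  have hgsum : Summable (fun k => 16 * ((e k : ℕ):ℝ) ^ (-(3/2) : ℝ)) :=
    ((Real.summable_nat_rpow.2 (by norm_num)).mul_left 16).comp_injective heInj
  have hbsum : Summable (fun k => b k ^ 2) := by
    refine Summable.of_nonneg_of_le (fun k => sq_nonneg _) (fun k => ?_) hgsum
    rw [hb]
    exact bound1 (he2' k)
  have hconvr := key_indep_sum_converges Zr hZrmeas hZrind b hZrb hZrmean hbsum
  have hconvi := key_indep_sum_converges Zi hZimeas hZiind b hZib hZimean hbsum
  have hN1 : ∀ᵐ ω ∂μ, ∀ q : Nat.Primes, ‖X (q:ℕ) ω‖ = 1 :=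
    ae_all_iff.2 fun q => hX1 q q.2
  filter_upwards [hconvr, hconvi, hN1] with ω hr hi hNω
  obtain ⟨Lr, hLr⟩ := hr
  obtain ⟨Li, hLi⟩ := hi
  set r : ℕ → ℂ := fun k =>
    ((Real.log (e k) : ℝ) : ℂ) * (X (e k) ω) ^ 2
      / (((e k : ℕ):ℂ) * (((e k : ℕ):ℂ) - X (e k) ω)) with hrdef
  have hnorm1 : ∀ k, ‖X (e k) ω‖ = 1 := fun k => hNω ⟨e k, hePrime k⟩
  have hden : ∀ k, ((e k : ℕ):ℝ) - 1 ≤ ‖((e k : ℕ):ℂ) - X (e k) ω‖ := by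
    intro k
    have h1 := norm_sub_norm_le ((e k : ℕ):ℂ) (X (e k) ω)
    rwa [Complex.norm_natCast, hnorm1 k] at h1
  have hden0 : ∀ k, ((e k : ℕ):ℂ) - X (e k) ω ≠ 0 := by
    intro k h
    have h1 := hden k
    rw [h, norm_zero] at h1
    linarith [he2' k]
  have hrb : ∀ k, ‖r k‖ ≤ 16 * ((e k : ℕ):ℝ) ^ (-(3/2) : ℝ) := by
    intro k
    rw [hrdef]
    simp only
    rw [norm_div, norm_mul, norm_mul, norm_pow, hnorm1 k, Complex.norm_natCast,
      Complex.norm_real, Real.norm_eq_abs,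
      abs_of_nonneg (Real.log_nonneg (by linarith [he2' k]))]
    simp only [one_pow, mul_one]
    exact bound2 (he2' k) (hden k)
  have hrsum : Summable r := Summable.of_norm_bounded hgsum hrb
  have hmsum : Tendsto (fun K => ∑ k ∈ Finset.range K, c k * X (e k) ω) atTop
      (𝓝 ((Lr : ℂ) + (Li : ℂ) * Complex.I)) := by
    have heq : ∀ K, ∑ k ∈ Finset.range K, c k * X (e k) ω
        = ((∑ k ∈ Finset.range K, Zr k ω : ℝ) : ℂ)
          + ((∑ k ∈ Finset.range K, Zi k ω : ℝ) : ℂ) * Complex.I := by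
      intro K
      rw [Complex.ofReal_sum, Complex.ofReal_sum, Finset.sum_mul, ← Finset.sum_add_distrib]
      exact Finset.sum_congr rfl fun k _ => (Complex.re_add_im _).symm
    rw [funext heq]
    exact ((Complex.continuous_ofReal.tendsto Lr).comp hLr).add
      (((Complex.continuous_ofReal.tendsto Li).comp hLi).mul_const Complex.I)
  have hrtend : Tendsto (fun K => ∑ k ∈ Finset.range K, r k) atTop (𝓝 (∑' k, r k)) :=
    hrsum.hasSum.tendsto_sum_nat
  have hsplit : ∀ k, ((Real.log (e k) : ℝ) : ℂ) * X (e k) ω / (((e k : ℕ):ℂ) - X (e k) ω)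
      = c k * X (e k) ω + r k := by
    intro k
    have hp0 : ((e k : ℕ):ℂ) ≠ 0 := Nat.cast_ne_zero.2 (by have := he2 k; omega)
    rw [hc, hrdef]
    simp only
    field_simp [hp0, hden0 k]
    ring
  refine ⟨((Lr : ℂ) + (Li : ℂ) * Complex.I) + ∑' k, r k, ?_⟩
  have hkey : Tendsto (fun K => ∑ k ∈ Finset.range K,
      ((Real.log (e k) : ℝ) : ℂ) * X (e k) ω / (((e k : ℕ):ℂ) - X (e k) ω)) atTop
      (𝓝 (((Lr : ℂ) + (Li : ℂ) * Complex.I) + ∑' k, r k)) := by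
    refine Tendsto.congr (fun K => ?_) (hmsum.add hrtend)
    rw [← Finset.sum_add_distrib]
    exact Finset.sum_congr rfl fun k _ => (hsplit k).symm
  have hcount := tendsto_count_atTop Nat.Prime Nat.infinite_setOf_prime
  refine (hkey.comp hcount).congr fun N => ?_
  exact (sum_filter_range_eq_sum_count Nat.Prime
    (fun p => ((Real.log p : ℝ) : ℂ) * X p ω / ((p:ℂ) - X p ω)) N).symm
end

section
/- Let K(z) = (sin(πz)/(πz))^2 (with K(0) = 1). Then the Fourier transform of K (with the convention K̂(ξ) = ∫_ℝ K(x) e^{−2πi ξ x} dx) equals max(0, 1 − |ξ|) for all real ξ. -/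
open MeasureTheory Real Complex FourierTransform intervalIntegral

/-- The Fejér kernel on `ℝ`. -/
noncomputable def Kfejer (x : ℝ) : ℝ :=
  if x = 0 then 1 else (Real.sin (Real.pi * x) / (Real.pi * x)) ^ 2

noncomputable def Tri (ξ : ℝ) : ℂ := ((max 0 (1 - |ξ|) : ℝ) : ℂ)

lemma Tri_cont : Continuous Tri :=
  Complex.continuous_ofReal.comp (continuous_const.max (by continuity))

lemma Tri_zero {ξ : ℝ} (h : 1 ≤ |ξ|) : Tri ξ = 0 := by
  simp [Tri, max_eq_left, sub_nonpos.2 h]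

lemma piece1 (c : ℂ) (hc : c ≠ 0) :
    (∫ v in (0:ℝ)..1, (1 - (v:ℂ)) * Complex.exp (-c * v))
      = (1/c^2) * Complex.exp (-c) - (-1/c + 1/c^2) := by
  have key : ∀ ξ ∈ Set.uIcc (0:ℝ) 1,
      HasDerivAt (fun t : ℝ => (((t:ℂ)-1)/c + 1/c^2) * Complex.exp (-c*t))
        ((1 - (ξ:ℂ)) * Complex.exp (-c*ξ)) ξ := by
    intro ξ _
    have h1 : HasDerivAt (fun z : ℂ => ((z-1)/c + 1/c^2) * Complex.exp (-c*z))
        ((1 - (ξ:ℂ)) * Complex.exp (-c*ξ)) (ξ:ℂ) := by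
      have hlin : HasDerivAt (fun z : ℂ => (z-1)/c + 1/c^2) (1/c) (ξ:ℂ) :=
        (((hasDerivAt_id (ξ:ℂ)).sub_const 1).div_const c).add_const (1/c^2)
      have hexp : HasDerivAt (fun z : ℂ => Complex.exp (-c*z))
          (Complex.exp (-c*(ξ:ℂ)) * (-c)) (ξ:ℂ) := by
        simpa using ((hasDerivAt_id (ξ:ℂ)).const_mul (-c)).cexp
      have := hlin.mul hexp
      refine this.congr_deriv ?_
      field_simp
      ring
    exact h1.comp_ofReal
  rw [intervalIntegral.integral_eq_sub_of_hasDerivAt key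
    (by apply Continuous.intervalIntegrable; continuity)]
  simp only [Complex.ofReal_one, Complex.ofReal_zero, mul_zero, mul_one, Complex.exp_zero]
  ring

lemma piece2 (c : ℂ) (hc : c ≠ 0) :
    (∫ v in (-1:ℝ)..0, (1 + (v:ℂ)) * Complex.exp (-c * v))
      = (-1/c - 1/c^2) - (-(1/c^2)) * Complex.exp c := by
  have key : ∀ ξ ∈ Set.uIcc (-1:ℝ) 0,
      HasDerivAt (fun t : ℝ => (-(((t:ℂ)+1)/c) - 1/c^2) * Complex.exp (-c*t))
        ((1 + (ξ:ℂ)) * Complex.exp (-c*ξ)) ξ := by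
    intro ξ _
    have h1 : HasDerivAt (fun z : ℂ => (-((z+1)/c) - 1/c^2) * Complex.exp (-c*z))
        ((1 + (ξ:ℂ)) * Complex.exp (-c*ξ)) (ξ:ℂ) := by
      have hlin : HasDerivAt (fun z : ℂ => -((z+1)/c) - 1/c^2) (-(1/c)) (ξ:ℂ) :=
        ((((hasDerivAt_id (ξ:ℂ)).add_const 1).div_const c).neg).sub_const (1/c^2)
      have hexp : HasDerivAt (fun z : ℂ => Complex.exp (-c*z))
          (Complex.exp (-c*(ξ:ℂ)) * (-c)) (ξ:ℂ) := by
        simpa using ((hasDerivAt_id (ξ:ℂ)).const_mul (-c)).cexp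
      have := hlin.mul hexp
      refine this.congr_deriv ?_
      field_simp
      ring
    exact h1.comp_ofReal
  rw [intervalIntegral.integral_eq_sub_of_hasDerivAt key
    (by apply Continuous.intervalIntegrable; continuity)]
  simp only [Complex.ofReal_neg, Complex.ofReal_one, Complex.ofReal_zero, mul_zero, mul_one,
    Complex.exp_zero, mul_neg, neg_neg]
  ring

lemma fourier_Tri (x : ℝ) : 𝓕 Tri x = (Kfejer x : ℂ) := by
  rw [Real.fourier_real_eq_integral_exp_smul]
  have hcont : Continuous fun v : ℝ => Complex.exp (↑(-2 * π * v * x) * Complex.I) • Tri v := by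
    apply Continuous.smul (f := fun v : ℝ => Complex.exp (↑(-2 * π * v * x) * Complex.I)) (g := Tri) _ Tri_cont
    exact Complex.continuous_exp.comp (by continuity)
  have step1 : (∫ v : ℝ, Complex.exp (↑(-2 * π * v * x) * Complex.I) • Tri v)
      = ∫ v in (-1:ℝ)..1, Complex.exp (↑(-2 * π * v * x) * Complex.I) • Tri v := by
    rw [intervalIntegral.integral_of_le (by norm_num : (-1:ℝ) ≤ 1),
      ← MeasureTheory.integral_Icc_eq_integral_Ioc,
      setIntegral_eq_integral_of_forall_compl_eq_zero]
    intro v hv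
    rw [Tri_zero, smul_zero]
    simp only [Set.mem_Icc, not_and_or, not_le] at hv
    rcases hv with h | h
    · rw [abs_of_neg (by linarith)]; linarith
    · rw [abs_of_pos (by linarith)]; linarith
  rw [step1, ← intervalIntegral.integral_add_adjacent_intervals
    (hcont.intervalIntegrable (-1) 0) (hcont.intervalIntegrable 0 1)]
  obtain ⟨c, hcdef⟩ : ∃ c : ℂ, c = 2 * π * Complex.I * x := ⟨_, rfl⟩
  have hTri1 : ∀ ξ ∈ Set.uIcc (0:ℝ) 1, Tri ξ = ((1 - ξ : ℝ) : ℂ) := by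
    intro ξ hξ
    rw [Set.uIcc_of_le (by norm_num)] at hξ
    rw [Tri]; congr 1
    rw [_root_.abs_of_nonneg hξ.1]; exact max_eq_right (by linarith [hξ.2])
  have hTri2 : ∀ ξ ∈ Set.uIcc (-1:ℝ) 0, Tri ξ = ((1 + ξ : ℝ) : ℂ) := by
    intro ξ hξ
    rw [Set.uIcc_of_le (by norm_num)] at hξ
    rw [Tri]; congr 1
    rw [_root_.abs_of_nonpos hξ.2]; rw [max_eq_right (by linarith [hξ.1])]; ring
  rcases eq_or_ne x 0 with hx | hx
  · subst hx
    have e1 : (∫ v in (0:ℝ)..1, Complex.exp (↑(-2 * π * v * 0) * Complex.I) • Tri v)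
        = ∫ v in (0:ℝ)..1, ((1 - v : ℝ) : ℂ) := by
      apply intervalIntegral.integral_congr
      intro ξ hξ
      dsimp only
      rw [hTri1 ξ hξ]
      norm_num
    have e2 : (∫ v in (-1:ℝ)..0, Complex.exp (↑(-2 * π * v * 0) * Complex.I) • Tri v)
        = ∫ v in (-1:ℝ)..0, ((1 + v : ℝ) : ℂ) := by
      apply intervalIntegral.integral_congr
      intro ξ hξ
      dsimp only
      rw [hTri2 ξ hξ]
      norm_num
    rw [e1, e2, intervalIntegral.integral_ofReal, intervalIntegral.integral_ofReal]
    have r1 : (∫ v in (0:ℝ)..1, (1 - v)) = 1/2 := by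
      have : (∫ v in (0:ℝ)..1, (1 - v)) = (∫ v in (0:ℝ)..1, (1:ℝ)) - ∫ v in (0:ℝ)..1, v :=
        intervalIntegral.integral_sub intervalIntegrable_const
          (intervalIntegral.intervalIntegrable_id)
      rw [this, integral_id]
      norm_num
    have r2 : (∫ v in (-1:ℝ)..0, (1 + v)) = 1/2 := by
      have : (∫ v in (-1:ℝ)..0, (1 + v)) = (∫ v in (-1:ℝ)..0, (1:ℝ)) + ∫ v in (-1:ℝ)..0, v :=
        intervalIntegral.integral_add intervalIntegrable_const
          (intervalIntegral.intervalIntegrable_id)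
      rw [this, integral_id]
      norm_num
    rw [r1, r2]
    norm_num [Kfejer]
  · have hc : c ≠ 0 := by
      rw [hcdef]
      simp [Real.pi_ne_zero, Complex.I_ne_zero, Complex.ofReal_ne_zero, hx]
    have e1 : (∫ v in (0:ℝ)..1, Complex.exp (↑(-2 * π * v * x) * Complex.I) • Tri v)
        = ∫ v in (0:ℝ)..1, (1 - (v:ℂ)) * Complex.exp (-c * v) := by
      apply intervalIntegral.integral_congr
      intro ξ hξ
      dsimp only
      rw [hTri1 ξ hξ, smul_eq_mul, mul_comm]
      congr 2
      · push_cast; ring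
      · push_cast [hcdef]; ring
    have e2 : (∫ v in (-1:ℝ)..0, Complex.exp (↑(-2 * π * v * x) * Complex.I) • Tri v)
        = ∫ v in (-1:ℝ)..0, (1 + (v:ℂ)) * Complex.exp (-c * v) := by
      apply intervalIntegral.integral_congr
      intro ξ hξ
      dsimp only
      rw [hTri2 ξ hξ, smul_eq_mul, mul_comm]
      congr 2
      · push_cast; ring
      · push_cast [hcdef]; ring
    rw [e1, e2, piece1 c hc, piece2 c hc]
    -- now algebra
    have hexpc : Complex.exp c + Complex.exp (-c) = 2 * (Real.cos (2*π*x) : ℂ) := by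
      have h1 : c = ((2*π*x : ℝ) : ℂ) * Complex.I := by rw [hcdef]; push_cast; ring
      rw [h1, ← neg_mul, Complex.exp_mul_I, Complex.exp_mul_I, Complex.cos_neg, Complex.sin_neg,
        ← Complex.ofReal_cos]
      ring
    have hcos : (Real.cos (2*π*x) : ℂ) = 1 - 2 * ((Real.sin (π*x) : ℝ) : ℂ)^2 := by
      have : Real.cos (2*π*x) = 1 - 2 * Real.sin (π*x)^2 := by
        rw [show 2*π*x = 2*(π*x) by ring, Real.cos_two_mul]
        nlinarith [Real.sin_sq_add_cos_sq (π*x)]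
      rw [this]; push_cast; ring
    have hc2 : c^2 = -(4 * ((π:ℂ)*x)^2) := by
      rw [hcdef]
      linear_combination (4*(π:ℂ)^2*(x:ℂ)^2) * Complex.I_sq
    have hπx : (π:ℂ)*x ≠ 0 := by
      simp [Real.pi_ne_zero, Complex.ofReal_ne_zero, hx]
    have lhs_eq : (-1/c - 1/c^2) - (-(1/c^2)) * Complex.exp c
        + ((1/c^2) * Complex.exp (-c) - (-1/c + 1/c^2))
        = (Complex.exp c + Complex.exp (-c) - 2)/c^2 := by
      rw [eq_div_iff (pow_ne_zero 2 hc)]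
      simp only [one_div, ← inv_pow]
      linear_combination ((c*c⁻¹ + 1) * (Complex.exp c + Complex.exp (-c) - 2))
        * (mul_inv_cancel₀ hc)
    rw [lhs_eq, hexpc, hcos, hc2, Kfejer, if_neg hx]
    push_cast
    field_simp
    ring

lemma Tri_integrable : Integrable Tri := by
  apply Tri_cont.integrable_of_hasCompactSupport
  apply HasCompactSupport.intro (isCompact_Icc (a := (-1:ℝ)) (b := 1))
  intro x hx
  apply Tri_zero
  simp only [Set.mem_Icc, not_and_or, not_le] at hx
  rw [le_abs]
  rcases hx with h | h
  · right; linarith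
  · left; linarith

lemma Kfejer_nonneg (x : ℝ) : 0 ≤ Kfejer x := by
  rw [Kfejer]
  split
  · norm_num
  · positivity

lemma Kfejer_le (x : ℝ) : Kfejer x ≤ 2 * (1 + x^2)⁻¹ := by
  have hπ : (1:ℝ) ≤ π := by linarith [Real.pi_gt_three]
  have key : Kfejer x ≤ min 1 (x^2)⁻¹ ∨ x = 0 := by
    rcases eq_or_ne x 0 with h | h
    · right; exact h
    · left
      rw [Kfejer, if_neg h, le_min_iff]
      have hx2 : (0:ℝ) < x^2 := by positivity
      constructor
      · rw [div_pow, div_le_one (by positivity)]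
        calc Real.sin (π*x)^2 ≤ (π*x)^2 := Real.sin_sq_le_sq
          _ ≤ (π*x)^2 := le_refl _
      · rw [div_pow, div_le_iff₀ (by positivity)]
        have h1 : Real.sin (π*x)^2 ≤ 1 := by
          nlinarith [Real.sin_sq_add_cos_sq (π*x), sq_nonneg (Real.cos (π*x))]
        calc Real.sin (π*x)^2 ≤ 1 := h1
          _ ≤ (x^2)⁻¹ * (π*x)^2 := by
            rw [mul_pow]
            rw [← mul_assoc, mul_comm ((x^2)⁻¹) (π^2), mul_assoc,
              inv_mul_cancel₀ (ne_of_gt hx2), mul_one]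
            nlinarith
  rcases key with h | h
  · rcases le_or_gt (x^2) 1 with h2 | h2
    · calc Kfejer x ≤ 1 := h.trans (min_le_left _ _)
        _ ≤ 2 * (1 + x^2)⁻¹ := by
          rw [le_mul_inv_iff₀ (by positivity)]; linarith
    · calc Kfejer x ≤ (x^2)⁻¹ := h.trans (min_le_right _ _)
        _ ≤ 2 * (1 + x^2)⁻¹ := by
          have h3 : (0:ℝ) < x^2 := by positivity
          have h4 : (0:ℝ) < 1 + x^2 := by positivity
          rw [← one_div, ← div_eq_mul_inv, div_le_div_iff₀ h3 h4]
          linarith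
  · subst h; norm_num [Kfejer]

lemma Kfejer_measurable : Measurable Kfejer := by
  apply Measurable.ite (measurableSet_eq_fun measurable_id measurable_const) measurable_const
  exact (Real.measurable_sin.comp (measurable_const.mul measurable_id)).div
    (measurable_const.mul measurable_id) |>.pow_const 2

lemma Kfejer_integrable : Integrable (fun x : ℝ => (Kfejer x : ℂ)) := by
  apply Integrable.mono' ((integrable_inv_one_add_sq).const_mul 2)
  · exact (Complex.measurable_ofReal.comp Kfejer_measurable).aestronglyMeasurable
  · filter_upwards with x
    rw [Complex.norm_real, Real.norm_eq_abs, _root_.abs_of_nonneg (Kfejer_nonneg x)]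
    exact Kfejer_le x

lemma fourierTri_integrable : Integrable (𝓕 Tri) := by
  have : 𝓕 Tri = fun x => (Kfejer x : ℂ) := funext fourier_Tri
  rw [this]
  exact Kfejer_integrable

theorem fejer_fourier_transform (ξ : ℝ) :
    ∫ x : ℝ, (Kfejer x : ℂ) * Complex.exp (-2 * Real.pi * Complex.I * ξ * x)
      = ((max 0 (1 - |ξ|) : ℝ) : ℂ) := by
  have h1 : (∫ x : ℝ, (Kfejer x : ℂ) * Complex.exp (-2 * Real.pi * Complex.I * ξ * x))
      = 𝓕 (fun x => (Kfejer x : ℂ)) ξ := by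
    rw [Real.fourier_real_eq_integral_exp_smul]
    congr 1
    funext x
    rw [smul_eq_mul, mul_comm]
    congr 1
    push_cast
    ring
  rw [h1]
  have h2 : (fun x => (Kfejer x : ℂ)) = 𝓕 Tri := funext fun x => (fourier_Tri x).symm
  rw [h2]
  have h3 : 𝓕 (𝓕 Tri) ξ = 𝓕⁻ (𝓕 Tri) (-ξ) := by
    rw [Real.fourierInv_eq_fourier_neg, neg_neg]
  rw [h3, Tri_integrable.fourierInv_fourier_eq fourierTri_integrable (Tri_cont.continuousAt)]
  rw [Tri, abs_neg]
end
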